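/- arXiv:math/0408348 — 2 statements merged into one kernel-verified Lean document; each statement's English description precedes it below -/
import Mathlib

section
/- The dendriform addition of groves is well-defined: for groves (nonempty sets of tree names of fixed degree) G ⊆ N^n and H ⊆ N^m, the union over v̄ ∈ G, w̄ ∈ H of the intervals [v̄ ↗ w̄, v̄ ↖ w̄] is a grove in N^{n+m}, i.e., each tree name in the result appears for exactly one pair (v̄, w̄). -/
/-- Planar rooted binary trees. -/
inductive PB : Type
  | leaf : PB
  | node : PB → PB → PB
  deriving DecidableEq

namespace PB

/-- The name (vector encoding) of a planar binary tree. -/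
def name : PB → List ℕ
  | leaf => []
  | node l r => name l ++ [1] ++ (name r).map (fun x => x + (name l).length + 1)

/-- Number of internal (trivalent) vertices. -/
def nodes : PB → ℕ
  | leaf => 0
  | node l r => nodes l + nodes r + 1

/-- Mirror image of a tree. -/
def mirror : PB → PB
  | leaf => leaf
  | node l r => node (mirror r) (mirror l)

/-- Left subtree. -/
def left : PB → PB
  | leaf => leaf
  | node l _ => l

/-- Right subtree. -/
def right : PB → PB
  | leaf => leaf
  | node _ r => r

end PB

/-- Grafting on vectors: v ∨ w = (v, 1, w + (len v + 1)). -/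
def graft (v w : List ℕ) : List ℕ := v ++ [1] ++ w.map (fun x => x + v.length + 1)

/-- A list is a tree name if it is the name of some planar binary tree. -/
def TreeName (v : List ℕ) : Prop := ∃ t : PB, PB.name t = v

/-- Componentwise order on vectors (of the same length). -/
def vle (v w : List ℕ) : Prop := List.Forall₂ (· ≤ ·) v w

/-- Strict componentwise order. -/
def vlt (v w : List ℕ) : Prop := vle v w ∧ v ≠ w

/-- k ▷ w : shift all coordinates ≠ 1 by k, fix coordinates equal to 1. -/
def rsh (k : ℕ) (w : List ℕ) : List ℕ := w.map (fun x => if x = 1 then 1 else x + k)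

/-- The over operation on tree names: v ↗ w = (v, len v ▷ w). -/
def overOp (v w : List ℕ) : List ℕ := v ++ rsh v.length w

/-- The under operation on tree names: v ↖ w = (v, len v + w). -/
def under (v w : List ℕ) : List ℕ := v ++ w.map (fun x => x + v.length)

/-- Componentwise interval of lists. -/
def listIcc : List ℕ → List ℕ → Finset (List ℕ)
  | a :: as, b :: bs => ((Finset.Icc a b) ×ˢ listIcc as bs).image fun p => p.1 :: p.2
  | _, _ => {[]}

open Classical in
/-- Componentwise interval of tree names. -/
noncomputable def treeIcc (a b : List ℕ) : Finset (List ℕ) :=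
  (listIcc a b).filter TreeName

/-- Dendriform addition of tree names: all tree names t with v ↗ w ≤ t ≤ v ↖ w. -/
noncomputable def dplus (v w : List ℕ) : Finset (List ℕ) :=
  treeIcc (overOp v w) (under v w)

lemma name_ge_one : ∀ t : PB, ∀ x ∈ PB.name t, 1 ≤ x := by
  intro t
  induction t with
  | leaf => simp [PB.name]
  | node l r ihl ihr =>
    intro x hx
    simp only [PB.name, List.mem_append, List.mem_singleton, List.mem_map] at hx
    rcases hx with (hx | hx) | ⟨y, hy, rfl⟩
    · exact ihl x hx
    · omega
    · omega

lemma treeName_ge_one {v : List ℕ} (h : TreeName v) : ∀ x ∈ v, 1 ≤ x := by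
  obtain ⟨t, rfl⟩ := h; exact name_ge_one t

lemma mem_listIcc : ∀ {a b t : List ℕ}, a.length = b.length →
    (t ∈ listIcc a b ↔ (vle a t ∧ vle t b)) := by
  intro a
  induction a with
  | nil =>
    intro b t h
    cases b with
    | nil =>
      simp [listIcc, vle, List.forall₂_nil_left_iff, List.forall₂_nil_right_iff]
    | cons y bs => simp at h
  | cons x as ih =>
    intro b t h
    cases b with
    | nil => simp at h
    | cons y bs =>
      simp only [listIcc, Finset.mem_image, Finset.mem_product, Finset.mem_Icc]
      constructor
      · rintro ⟨⟨c, cs⟩, ⟨⟨h1, h2⟩, h3⟩, rfl⟩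
        have := (ih (by simpa using h)).1 h3
        exact ⟨List.Forall₂.cons h1 this.1, List.Forall₂.cons h2 this.2⟩
      · rintro ⟨hl, hr⟩
        cases t with
        | nil => exact absurd hl (by simp [vle])
        | cons c cs =>
          rw [vle, List.forall₂_cons] at hl hr
          exact ⟨(c, cs), ⟨⟨hl.1, hr.1⟩, (ih (by simpa using h)).2 ⟨hl.2, hr.2⟩⟩, rfl⟩

lemma forall2_le_getD {l1 l2 : List ℕ} (h : List.Forall₂ (· ≤ ·) l1 l2) (i : ℕ)
    (hi : i < l1.length) : l1.getD i 0 ≤ l2.getD i 0 := by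
  have hlen := List.Forall₂.length_eq h
  rw [List.getD_eq_getElem _ _ hi, List.getD_eq_getElem _ _ (hlen ▸ hi)]
  exact (List.forall₂_iff_get.1 h).2 i hi (hlen ▸ hi)

lemma key {v w t : List ℕ} (h1 : vle (overOp v w) t) (h2 : vle t (under v w)) :
    t.length = v.length + w.length ∧
    (∀ i, i < v.length → t.getD i 0 = v.getD i 0) ∧
    (∀ j, j < w.length →
      (w.getD j 0 ≠ 1 → t.getD (v.length + j) 0 = w.getD j 0 + v.length) ∧
      (w.getD j 0 = 1 → t.getD (v.length + j) 0 ≤ 1 + v.length)) := by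
  have hlo : (overOp v w).length = v.length + w.length := by simp [overOp, rsh]
  have hhi : (under v w).length = v.length + w.length := by simp [under]
  have hlt : t.length = v.length + w.length := by
    have := List.Forall₂.length_eq h1; omega
  refine ⟨hlt, ?_, ?_⟩
  · intro i hi
    have a1 := forall2_le_getD h1 i (by omega)
    have a2 := forall2_le_getD h2 i (by omega)
    have e1 : (overOp v w).getD i 0 = v.getD i 0 := by
      rw [List.getD_eq_getElem _ _ (by omega : i < (overOp v w).length),
        List.getD_eq_getElem _ _ hi]
      exact List.getElem_append_left hi
    have e2 : (under v w).getD i 0 = v.getD i 0 := by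
      rw [List.getD_eq_getElem _ _ (by omega : i < (under v w).length),
        List.getD_eq_getElem _ _ hi]
      exact List.getElem_append_left hi
    omega
  · intro j hj
    have a1 := forall2_le_getD h1 (v.length + j) (by omega)
    have a2 := forall2_le_getD h2 (v.length + j) (by omega)
    have e1 : (overOp v w).getD (v.length + j) 0 =
        (if w.getD j 0 = 1 then 1 else w.getD j 0 + v.length) := by
      rw [List.getD_eq_getElem _ _ (by omega : v.length + j < (overOp v w).length),
        List.getD_eq_getElem _ _ hj]
      show (v ++ rsh v.length w)[v.length + j]'(by simp [rsh]; omega) = _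
      rw [List.getElem_append_right (by omega)]
      simp [rsh, Nat.add_sub_cancel_left]
    have e2 : (under v w).getD (v.length + j) 0 = w.getD j 0 + v.length := by
      rw [List.getD_eq_getElem _ _ (by omega : v.length + j < (under v w).length),
        List.getD_eq_getElem _ _ hj]
      show (v ++ w.map (fun x => x + v.length))[v.length + j]'(by simp; omega) = _
      rw [List.getElem_append_right (by omega)]
      simp [Nat.add_sub_cancel_left]
    constructor
    · intro hw; rw [if_neg hw] at e1; omega
    · intro hw; rw [if_pos hw] at e1; omega

/-- Dendriform addition of groves is well defined: the union over v ∈ G, w ∈ H of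
the intervals [v ↗ w, v ↖ w] consists of tree names of degree n + m, and each such
tree name arises from exactly one pair (v, w). -/
theorem stmt11 (n m : ℕ) (hn : 0 < n) (hm : 0 < m) (G H : Set (List ℕ))
    (hG : G.Nonempty) (hH : H.Nonempty)
    (hGn : ∀ v ∈ G, TreeName v ∧ v.length = n)
    (hHm : ∀ w ∈ H, TreeName w ∧ w.length = m) :
    (∀ v ∈ G, ∀ w ∈ H, ∀ t ∈ dplus v w, TreeName t ∧ t.length = n + m) ∧
    (∀ t : List ℕ, ∀ v ∈ G, ∀ w ∈ H, ∀ v' ∈ G, ∀ w' ∈ H,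
      t ∈ dplus v w → t ∈ dplus v' w' → v = v' ∧ w = w') := by
  have hmem : ∀ v w t : List ℕ, t ∈ dplus v w ↔
      (TreeName t ∧ vle (overOp v w) t ∧ vle t (under v w)) := by
    classical
    intro v w t
    rw [dplus, treeIcc, Finset.mem_filter,
      mem_listIcc (by simp [overOp, under, rsh])]
    tauto
  constructor
  · intro v hv w hw t ht
    rw [hmem] at ht
    obtain ⟨htn, h1, h2⟩ := ht
    refine ⟨htn, ?_⟩
    have hk := (key h1 h2).1
    have e1 := (hGn v hv).2
    have e2 := (hHm w hw).2
    omega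
  · intro t v hv w hw v' hv' w' hw' ht ht'
    rw [hmem] at ht ht'
    obtain ⟨-, h1, h2⟩ := ht
    obtain ⟨-, h1', h2'⟩ := ht'
    obtain ⟨klen, kv, kw⟩ := key h1 h2
    obtain ⟨klen', kv', kw'⟩ := key h1' h2'
    have hvl := (hGn v hv).2
    have hvl' := (hGn v' hv').2
    have hwl := (hHm w hw).2
    have hwl' := (hHm w' hw').2
    rw [hvl, hwl] at kw
    rw [hvl', hwl'] at kw'
    constructor
    · apply List.ext_getElem (by omega)
      intro i hi1 hi2
      rw [← List.getD_eq_getElem v 0 hi1, ← List.getD_eq_getElem v' 0 hi2]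
      have e1 := kv i hi1
      have e2 := kv' i (by omega)
      omega
    · apply List.ext_getElem (by omega)
      intro j hj1 hj2
      rw [← List.getD_eq_getElem w 0 hj1, ← List.getD_eq_getElem w' 0 hj2]
      have ga : 1 ≤ w.getD j 0 := by
        apply treeName_ge_one (hHm w hw).1
        rw [List.getD_eq_getElem _ _ hj1]; exact List.getElem_mem _
      have gb : 1 ≤ w'.getD j 0 := by
        apply treeName_ge_one (hHm w' hw').1
        rw [List.getD_eq_getElem _ _ hj2]; exact List.getElem_mem _
      obtain ⟨f1, f2⟩ := kw j (by omega)
      obtain ⟨f1', f2'⟩ := kw' j (by omega)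
      by_cases ha : w.getD j 0 = 1 <;> by_cases hb : w'.getD j 0 = 1
      · omega
      · have := f2 ha; have := f1' hb; omega
      · have := f1 ha; have := f2' hb; omega
      · have := f1 ha; have := f1' hb; omega
end

section
/- For tree names, the Möbius function of the Tamari lattice satisfies M(v̄ ↗ w̄) = M(v̄)·M(w̄), and M(v̄ ↖ w̄) = (-1)^m · M(v̄) if w̄ = (1,2,...,m) (the right comb) and M(v̄ ↖ w̄) = 0 otherwise. -/
/-- The Möbius function μ(0̂, v) of the Tamari lattice on tree names:
(-1)^#{i : v_i = i ≠ 1} if every coordinate v_i equals 1 or i, and 0 otherwise. -/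
def Mob (v : List ℕ) : ℤ :=
  if ∀ i : Fin v.length, v.get i = 1 ∨ v.get i = i.val + 1 then
    (-1) ^ (Finset.univ.filter
      (fun i : Fin v.length => v.get i = i.val + 1 ∧ v.get i ≠ 1)).card
  else 0

def gfac (k x : ℕ) : ℤ := if x = 1 then 1 else if x = k + 1 then -1 else 0

def Mob' : ℕ → List ℕ → ℤ
  | _, [] => 1
  | k, x :: xs => gfac k x * Mob' (k + 1) xs

lemma Mob'_append (a b : List ℕ) : ∀ k, Mob' k (a ++ b) = Mob' k a * Mob' (k + a.length) b := by
  induction a with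
  | nil => simp [Mob']
  | cons x xs ih =>
    intro k
    have h : k + (x :: xs).length = (k + 1) + xs.length := by simp; omega
    rw [List.cons_append, Mob', Mob', ih (k + 1), mul_assoc, h]

lemma Mob'_eq_prod (v : List ℕ) :
    ∀ k, Mob' k v = ∏ i ∈ Finset.range v.length, gfac (k + i) (v.getD i 0) := by
  induction v with
  | nil => intro k; simp [Mob']
  | cons x xs ih =>
    intro k
    rw [Mob', ih (k + 1), List.length_cons, Finset.prod_range_succ']
    simp only [List.getD_cons_succ, List.getD_cons_zero, Nat.add_zero]
    rw [mul_comm]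
    congr 1
    apply Finset.prod_congr rfl
    intro i _
    congr 1
    omega


lemma getD_fin (v : List ℕ) (i : Fin v.length) : v.getD i.val 0 = v.get i := by
  rw [List.getD_eq_getElem _ _ i.isLt, List.get_eq_getElem]

open Finset in
lemma Mob_eq_Mob' (v : List ℕ) : Mob v = Mob' 0 v := by
  classical
  rw [Mob'_eq_prod]
  simp only [Nat.zero_add]
  unfold Mob
  split
  · next h =>
    have hcard : (Finset.univ.filter
        (fun i : Fin v.length => v.get i = i.val + 1 ∧ v.get i ≠ 1)).card
        = ((Finset.range v.length).filter
            (fun i => v.getD i 0 = i + 1 ∧ v.getD i 0 ≠ 1)).card := by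
      apply Finset.card_bij (fun i _ => i.val)
      · intro i hi
        simp only [Finset.mem_filter, Finset.mem_univ, true_and] at hi
        rw [Finset.mem_filter, Finset.mem_range]
        exact ⟨i.isLt, by rw [getD_fin]; exact hi.1, by rw [getD_fin]; exact hi.2⟩
      · intro a ha b hb hab
        exact Fin.ext hab
      · intro b hb
        rw [Finset.mem_filter, Finset.mem_range] at hb
        refine ⟨⟨b, hb.1⟩, ?_, rfl⟩
        rw [Finset.mem_filter]
        exact ⟨Finset.mem_univ _, by rw [← getD_fin v ⟨b, hb.1⟩]; exact hb.2.1,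
          by rw [← getD_fin v ⟨b, hb.1⟩]; exact hb.2.2⟩
    have h2 : ∀ i ∈ (Finset.range v.length).filter
        (fun i => v.getD i 0 = i + 1 ∧ v.getD i 0 ≠ 1), gfac i (v.getD i 0) = -1 := by
      intro i hi
      rw [Finset.mem_filter] at hi
      unfold gfac
      rw [if_neg hi.2.2, if_pos hi.2.1]
    have h3 : ∀ i ∈ (Finset.range v.length).filter
        (fun i => ¬(v.getD i 0 = i + 1 ∧ v.getD i 0 ≠ 1)), gfac i (v.getD i 0) = 1 := by
      intro i hi
      rw [Finset.mem_filter, Finset.mem_range] at hi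
      have h1 := h ⟨i, hi.1⟩
      rw [← getD_fin v ⟨i, hi.1⟩] at h1
      unfold gfac
      rcases not_and_or.mp hi.2 with h4 | h4
      · rcases h1 with h1 | h1
        · rw [if_pos h1]
        · exact absurd h1 h4
      · rw [if_pos (not_not.mp h4)]
    rw [hcard, ← Finset.prod_filter_mul_prod_filter_not (Finset.range v.length)
      (fun i => v.getD i 0 = i + 1 ∧ v.getD i 0 ≠ 1) (fun i => gfac i (v.getD i 0)),
      Finset.prod_eq_pow_card h2, Finset.prod_eq_pow_card h3, one_pow, mul_one]
  · next h =>
    push_neg at h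
    obtain ⟨i, hi1, hi2⟩ := h
    refine (Finset.prod_eq_zero (Finset.mem_range.mpr i.isLt) ?_).symm
    rw [getD_fin]
    unfold gfac
    rw [if_neg hi1, if_neg hi2]

lemma Mob'_rsh (n : ℕ) (hn : 1 ≤ n) :
    ∀ (w : List ℕ), (∀ x ∈ w, 1 ≤ x) → ∀ k, Mob' (n + k) (rsh n w) = Mob' k w := by
  intro w
  induction w with
  | nil => intro _ k; simp [rsh, Mob']
  | cons x xs ih =>
    intro hw k
    have hx : 1 ≤ x := hw x List.mem_cons_self
    have hxs : ∀ y ∈ xs, 1 ≤ y := fun y hy => hw y (List.mem_cons_of_mem _ hy)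
    have hr : rsh n (x :: xs) = (if x = 1 then 1 else x + n) :: rsh n xs := by
      simp [rsh]
    rw [hr, Mob', Mob', show n + k + 1 = n + (k + 1) by omega, ih hxs (k + 1)]
    congr 1
    unfold gfac
    split_ifs <;> omega

lemma Mob'_shift (n : ℕ) (hn : 1 ≤ n) :
    ∀ (w : List ℕ), (∀ x ∈ w, 1 ≤ x) → ∀ k, Mob' (n + k) (w.map (fun x => x + n)) =
      if w = List.range' (k + 1) w.length then (-1) ^ w.length else 0 := by
  intro w
  induction w with
  | nil => intro _ k; simp [Mob']
  | cons x xs ih =>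
    intro hw k
    have hx : 1 ≤ x := hw x List.mem_cons_self
    have hxs : ∀ y ∈ xs, 1 ≤ y := fun y hy => hw y (List.mem_cons_of_mem _ hy)
    rw [List.map_cons, Mob', show n + k + 1 = n + (k + 1) by omega, ih hxs (k + 1)]
    rw [List.length_cons, List.range'_succ]
    have hg : gfac (n + k) (x + n) = if x = k + 1 then -1 else 0 := by
      unfold gfac; split_ifs <;> omega
    rw [hg]
    by_cases hxk : x = k + 1
    · rw [if_pos hxk]
      by_cases hxsr : xs = List.range' (k + 1 + 1) xs.length
      · have hcons : x :: xs = (k + 1) :: List.range' (k + 1 + 1) xs.length := by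
          rw [hxk, ← hxsr]
        rw [if_pos hxsr, if_pos hcons, pow_succ]
        ring
      · have hcons : x :: xs ≠ (k + 1) :: List.range' (k + 1 + 1) xs.length := by
          intro hc; injection hc with h1 h2; exact hxsr h2
        rw [if_neg hxsr, if_neg hcons, mul_zero]
    · have hcons : x :: xs ≠ (k + 1) :: List.range' (k + 1 + 1) xs.length := by
        intro hc; injection hc with h1 h2; exact hxk h1
      rw [if_neg hxk, if_neg hcons, zero_mul]

lemma name_pos : ∀ t : PB, ∀ x ∈ t.name, 1 ≤ x := by
  intro t
  induction t with
  | leaf => simp [PB.name]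
  | node l r ihl ihr =>
    intro x hx
    simp only [PB.name, List.mem_append, List.mem_map, List.mem_singleton] at hx
    rcases hx with (hx | hx) | ⟨a, _, ha⟩
    · exact ihl x hx
    · omega
    · omega

lemma comb_eq_range' (m : ℕ) : (List.range m).map (· + 1) = List.range' 1 m := by
  rw [List.range'_eq_map_range]
  exact List.map_congr_left (fun x _ => Nat.add_comm x 1)

/-- Behaviour of the Tamari Möbius function under the over and under operations:
M(v ↗ w) = M(v)·M(w); M(v ↖ w) = (-1)^m · M(v) if w is the right comb
(1, 2, …, m), and M(v ↖ w) = 0 otherwise. -/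
theorem stmt19 (v w : List ℕ) (hv : TreeName v) (hw : TreeName w)
    (hv0 : v ≠ []) (hw0 : w ≠ []) :
    Mob (overOp v w) = Mob v * Mob w ∧
    (w = (List.range w.length).map (· + 1) →
      Mob (under v w) = (-1) ^ w.length * Mob v) ∧
    (w ≠ (List.range w.length).map (· + 1) → Mob (under v w) = 0) := by
  obtain ⟨tw, rfl⟩ := hw
  have hwpos : ∀ x ∈ tw.name, 1 ≤ x := name_pos tw
  set w := tw.name with hwdef
  have hn : 1 ≤ v.length := List.length_pos_iff.mpr hv0
  refine ⟨?_, ?_, ?_⟩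
  · rw [Mob_eq_Mob' (overOp v w), overOp, Mob'_append, Mob_eq_Mob' v, Mob_eq_Mob' w]
    congr 1
    have h := Mob'_rsh v.length hn w hwpos 0
    rw [Nat.add_zero] at h
    rw [Nat.zero_add]
    exact h
  all_goals {
    have key : Mob (under v w) = Mob' 0 v *
        (if w = List.range' 1 w.length then (-1) ^ w.length else 0) := by
      rw [Mob_eq_Mob' (under v w), under, Mob'_append, Nat.zero_add]
      congr 1
      have h := Mob'_shift v.length hn w hwpos 0
      rw [Nat.add_zero] at h
      rw [h]
    intro hwc
    first
    | (rw [key, if_pos (hwc.trans (comb_eq_range' w.length)), Mob_eq_Mob' v]; ring)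
    | (rw [key, if_neg (fun hc => hwc (hc.trans (comb_eq_range' w.length).symm)), mul_zero])
  }
end
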